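/- Let c be a coefficient family with radius of convergence at least R for some R > 0, and suppose c(W) ≠ 0 for some word W of length n. Then for every k ≥ n+1 there exist k×k real matrices N_1,…,N_d, each tridiagonal antisymmetric, such that the family (c(V) · N_V)_{V a word} is summable in the space of k×k real matrices and its sum ∑'_V c(V) · N_V is a nonzero matrix. -/

import Mathlib

open Matrix

/-- A `k × k` real matrix is tridiagonal antisymmetric if `N + Nᵀ = 0` and its `(a,b)`-entry
vanishes whenever `|a - b| ≠ 1`. -/
def TriAnti {k : ℕ} (N : Matrix (Fin k) (Fin k) ℝ) : Prop :=
  N + Nᵀ = 0 ∧ ∀ a b : Fin k, ((a : ℤ) - (b : ℤ)).natAbs ≠ 1 → N a b = 0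

namespace Stmt8Aux

variable {d : ℕ}

/-- The superdiagonal indicator matrix family, antisymmetrized. -/
def NN (k : ℕ) (W : List (Fin d)) (ε : ℝ) (j : Fin d) : Matrix (Fin k) (Fin k) ℝ :=
  Matrix.of fun a b =>
    (if b.val = a.val + 1 ∧ W[a.val]? = some j then ε else 0)
      - (if a.val = b.val + 1 ∧ W[b.val]? = some j then ε else 0)

lemma NN_apply (k : ℕ) (W : List (Fin d)) (ε : ℝ) (j : Fin d) (a b : Fin k) :
    NN k W ε j a b =
      (if b.val = a.val + 1 ∧ W[a.val]? = some j then ε else 0)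
        - (if a.val = b.val + 1 ∧ W[b.val]? = some j then ε else 0) := rfl

lemma NN_triAnti (k : ℕ) (W : List (Fin d)) (ε : ℝ) (j : Fin d) :
    TriAnti (NN k W ε j) := by
  constructor
  · ext a b
    simp only [Matrix.add_apply, Matrix.transpose_apply, Matrix.zero_apply, NN_apply]
    ring
  · intro a b hab
    rw [NN_apply, if_neg, if_neg]
    · ring
    · rintro ⟨h, -⟩; exact hab (by omega)
    · rintro ⟨h, -⟩; exact hab (by omega)

lemma NN_abs_le (k : ℕ) (W : List (Fin d)) (ε : ℝ) (j : Fin d) (a b : Fin k) :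
    |NN k W ε j a b| ≤ |ε| := by
  rw [NN_apply]
  by_cases h1 : b.val = a.val + 1 ∧ W[a.val]? = some j
  · rw [if_pos h1, if_neg (fun h => absurd h.1 (by omega)), sub_zero]
  · rw [if_neg h1]
    by_cases h2 : a.val = b.val + 1 ∧ W[b.val]? = some j
    · rw [if_pos h2, zero_sub, abs_neg]
    · rw [if_neg h2, sub_zero, abs_zero]
      exact abs_nonneg ε

lemma prod_abs_le (k : ℕ) (W : List (Fin d)) (ε : ℝ) (V : List (Fin d)) (a b : Fin k) :
    |((V.map (NN k W ε)).prod) a b| ≤ ((k : ℝ) * |ε|) ^ V.length := by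
  induction V generalizing a with
  | nil =>
      simp only [List.map_nil, List.prod_nil, List.length_nil, pow_zero, Matrix.one_apply]
      split <;> simp
  | cons j V ih =>
      rw [List.map_cons, List.prod_cons, Matrix.mul_apply, List.length_cons]
      calc |∑ x : Fin k, NN k W ε j a x * ((V.map (NN k W ε)).prod) x b|
          ≤ ∑ x : Fin k, |NN k W ε j a x * ((V.map (NN k W ε)).prod) x b| :=
            Finset.abs_sum_le_sum_abs _ _
        _ ≤ ∑ _x : Fin k, |ε| * ((k : ℝ) * |ε|) ^ V.length := by
            refine Finset.sum_le_sum fun x _ => ?_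
            rw [abs_mul]
            exact mul_le_mul (NN_abs_le k W ε j a x) (ih x) (abs_nonneg _) (abs_nonneg _)
        _ = ((k : ℝ) * |ε|) ^ (V.length + 1) := by
            rw [Finset.sum_const, Finset.card_univ, Fintype.card_fin, pow_succ,
              nsmul_eq_mul]
            ring

lemma key (k : ℕ) (W : List (Fin d)) (ε : ℝ) (hkW : W.length < k)
    (V : List (Fin d)) :
    ∀ (a : Fin k), a.val + V.length ≤ W.length →
      ((V.map (NN k W ε)).prod) a ⟨W.length, hkW⟩ =
        if a.val + V.length = W.length ∧ V = W.drop a.val then ε ^ V.length else 0 := by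
  induction V with
  | nil =>
      intro a ha
      simp only [List.map_nil, List.prod_nil, List.length_nil, Nat.add_zero, pow_zero,
        Matrix.one_apply]
      by_cases h : a.val = W.length
      · rw [if_pos (Fin.ext h), if_pos ⟨h, by rw [h, List.drop_length]⟩]
      · rw [if_neg (fun h1 => h (Fin.val_eq_of_eq h1)), if_neg (fun h1 => h h1.1)]
  | cons j V ih =>
      intro a ha
      rw [List.length_cons] at ha ⊢
      have ha1 : a.val + 1 < k := by omega
      rw [List.map_cons, List.prod_cons, Matrix.mul_apply]
      rw [Finset.sum_eq_single (⟨a.val + 1, ha1⟩ : Fin k)]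
      · -- main term
        have hP : ((V.map (NN k W ε)).prod) (⟨a.val + 1, ha1⟩ : Fin k) ⟨W.length, hkW⟩ =
            if a.val + 1 + V.length = W.length ∧ V = W.drop (a.val + 1) then ε ^ V.length
            else 0 :=
          ih ⟨a.val + 1, ha1⟩ (show a.val + 1 + V.length ≤ W.length by omega)
        have hN : NN k W ε j a ⟨a.val + 1, ha1⟩ =
            if W[a.val]? = some j then ε else 0 := by
          show (if a.val + 1 = a.val + 1 ∧ W[a.val]? = some j then ε else 0)
              - (if a.val = a.val + 1 + 1 ∧ W[(a.val + 1)]? = some j then ε else 0) = _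
          rw [if_neg (show ¬(a.val = a.val + 1 + 1 ∧ W[(a.val + 1)]? = some j) from
            fun h => absurd h.1 (by omega)), sub_zero]
          by_cases hj : W[a.val]? = some j
          · rw [if_pos ⟨rfl, hj⟩, if_pos hj]
          · rw [if_neg (fun h => hj h.2), if_neg hj]
        rw [hP, hN]
        by_cases hj : W[a.val]? = some j
        · have haW : a.val < W.length := by
            rcases List.getElem?_eq_some_iff.mp hj with ⟨h, -⟩
            simpa using h
          have hdrop : W.drop a.val = W[a.val] :: W.drop (a.val + 1) :=
            List.drop_eq_getElem_cons haW
          have hgj : W[a.val] = j := by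
            have h0 := List.getElem?_eq_getElem haW
            rw [hj] at h0
            simpa [List.get_eq_getElem] using h0.symm
          by_cases h2 : a.val + 1 + V.length = W.length ∧ V = W.drop (a.val + 1)
          · rw [if_pos hj, if_pos h2, if_pos, pow_succ]
            · ring
            · exact ⟨by omega, by rw [hdrop, hgj, h2.2]⟩
          · rw [if_pos hj, if_neg h2, if_neg, mul_zero]
            rintro ⟨hlen, hV⟩
            apply h2
            rw [hdrop, hgj] at hV
            exact ⟨by omega, by injection hV⟩
        · rw [if_neg hj, zero_mul, if_neg]
          rintro ⟨hlen, hV⟩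
          have haW : a.val < W.length := by omega
          have hdrop : W.drop a.val = W[a.val] :: W.drop (a.val + 1) :=
            List.drop_eq_getElem_cons haW
          rw [hdrop] at hV
          have hgj : W[a.val] = j := by injection hV with h1 h2; exact h1.symm
          apply hj
          rw [List.getElem?_eq_getElem haW]
          simp [List.get_eq_getElem, hgj]
      · -- other terms vanish
        intro x _ hx
        rw [NN_apply]
        by_cases hx1 : x.val = a.val + 1
        · exact absurd (Fin.ext hx1) hx
        · rw [if_neg (fun h => hx1 h.1)]
          by_cases hx2 : a.val = x.val + 1 ∧ W[x.val]? = some j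
          · obtain ⟨hxa, hxg⟩ := hx2
            have hP0 : ((V.map (NN k W ε)).prod) x ⟨W.length, hkW⟩ = 0 := by
              rw [ih x (by omega), if_neg]
              rintro ⟨h1, -⟩
              omega
            rw [hP0, mul_zero]
          · rw [if_neg hx2]
            simp
      · intro h
        exact absurd (Finset.mem_univ _) h

end Stmt8Aux

/-- if a coefficient family `c` with radius of convergence at least `R > 0`
satisfies `c(W) ≠ 0` for a word `W` of length `n`, then for every `k ≥ n + 1` there are
tridiagonal antisymmetric `k × k` real matrices `N_1, …, N_d` such that `(c(V) • N_V)_V` is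
summable with nonzero sum.  Here `N_V` is the ordered product `N_{v_1} ⬝ ⋯ ⬝ N_{v_m}`. -/
theorem stmt8 (d : ℕ) (hd : 0 < d) (c : List (Fin d) → ℝ) (R : ℝ) (hR : 0 < R)
    (hc : Summable fun V : List (Fin d) => |c V| * R ^ V.length)
    (W : List (Fin d)) (hW : c W ≠ 0) (k : ℕ) (hk : W.length + 1 ≤ k) :
    ∃ N : Fin d → Matrix (Fin k) (Fin k) ℝ,
      (∀ j, TriAnti (N j)) ∧
      Summable (fun V : List (Fin d) => c V • (V.map N).prod) ∧
      (∑' V : List (Fin d), c V • (V.map N).prod) ≠ 0 := by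
  classical
  have hnk : W.length < k := by omega
  have hk0 : (0 : ℝ) < (k : ℝ) := by
    have : 0 < k := by omega
    exact_mod_cast this
  have hcW : 0 < |c W| := abs_pos.mpr hW
  set S := ∑' V : List (Fin d), |c V| * R ^ V.length with hS
  have hS0 : 0 ≤ S := tsum_nonneg fun V => by positivity
  have hS1 : (0 : ℝ) < S + 1 := by linarith
  set ε : ℝ := min (R / (2 * k))
      (|c W| * R ^ (W.length + 1) / ((k : ℝ) ^ (W.length + 1) * (2 * (S + 1)))) with hεdef
  have hε0 : 0 < ε :=
    lt_min (by positivity)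
      (div_pos (mul_pos hcW (pow_pos hR _)) (mul_pos (pow_pos hk0 _) (by linarith)))
  have hεabs : |ε| = ε := abs_of_pos hε0
  have hkεR : (k : ℝ) * ε ≤ R := by
    have h1 : ε ≤ R / (2 * k) := min_le_left _ _
    have h2 : (k : ℝ) * (R / (2 * k)) = R / 2 := by field_simp
    nlinarith
  have hkε0 : (0 : ℝ) ≤ (k : ℝ) * ε := by positivity
  set N := Stmt8Aux.NN k W ε with hN
  obtain ⟨a0, ha0⟩ : ∃ a : Fin k, a.val = 0 := ⟨⟨0, by omega⟩, rfl⟩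
  have hPbound : ∀ (V : List (Fin d)) (a b : Fin k),
      |((V.map N).prod) a b| ≤ ((k : ℝ) * ε) ^ V.length := by
    intro V a b
    have h := Stmt8Aux.prod_abs_le k W ε V a b
    rwa [hεabs] at h
  have hbound : ∀ (V : List (Fin d)) (a b : Fin k),
      |c V * ((V.map N).prod) a b| ≤ |c V| * R ^ V.length := by
    intro V a b
    rw [abs_mul]
    calc |c V| * |((V.map N).prod) a b| ≤ |c V| * ((k : ℝ) * ε) ^ V.length :=
          mul_le_mul_of_nonneg_left (hPbound V a b) (abs_nonneg _)
      _ ≤ |c V| * R ^ V.length :=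
          mul_le_mul_of_nonneg_left (pow_le_pow_left₀ hkε0 hkεR _) (abs_nonneg _)
  have hcomp : ∀ a b : Fin k, Summable (fun V : List (Fin d) => c V * ((V.map N).prod) a b) := by
    intro a b
    apply Summable.of_abs
    exact hc.of_nonneg_of_le (fun V => abs_nonneg _) (fun V => hbound V a b)
  have hsum : Summable (fun V : List (Fin d) => c V • (V.map N).prod) :=
    Pi.summable.mpr fun a => Pi.summable.mpr fun b => hcomp a b
  -- key evaluations at the (a0, ⟨W.length⟩) entry
  have hkey0 : ∀ V : List (Fin d), V.length ≤ W.length →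
      ((V.map N).prod) a0 ⟨W.length, hnk⟩ = if V = W then ε ^ W.length else 0 := by
    intro V hV
    rw [hN, Stmt8Aux.key k W ε hnk V a0 (by omega)]
    by_cases hVW : V = W
    · subst hVW
      rw [if_pos ⟨by omega, by rw [ha0, List.drop_zero]⟩, if_pos rfl]
    · rw [if_neg, if_neg hVW]
      rintro ⟨h1, h2⟩
      apply hVW
      rw [h2, ha0, List.drop_zero]
  have hg : Summable (fun V : List (Fin d) => c V * ((V.map N).prod) a0 ⟨W.length, hnk⟩) :=
    hcomp a0 _
  have happ : (∑' V : List (Fin d), c V • (V.map N).prod) a0 ⟨W.length, hnk⟩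
      = ∑' V : List (Fin d), c V * ((V.map N).prod) a0 ⟨W.length, hnk⟩ := by
    have h1 : (∑' V : List (Fin d), c V • (V.map N).prod) a0
        = ∑' V : List (Fin d), (c V • (V.map N).prod) a0 := tsum_apply hsum
    have h2 : (∑' V : List (Fin d), (c V • (V.map N).prod) a0) ⟨W.length, hnk⟩
        = ∑' V : List (Fin d), (c V • (V.map N).prod) a0 ⟨W.length, hnk⟩ :=
      tsum_apply (Pi.summable.mp hsum a0)
    rw [h1, h2]
    exact tsum_congr fun V => by simp [Matrix.smul_apply, smul_eq_mul]
  set T := ∑' V : List (Fin d),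
      (if V = W then 0 else c V * ((V.map N).prod) a0 ⟨W.length, hnk⟩) with hTdef
  have hsplit : ∑' V : List (Fin d), c V * ((V.map N).prod) a0 ⟨W.length, hnk⟩
      = c W * ((W.map N).prod) a0 ⟨W.length, hnk⟩ + T := Summable.tsum_eq_add_tsum_ite hg W
  have hgW : c W * ((W.map N).prod) a0 ⟨W.length, hnk⟩ = c W * ε ^ W.length := by
    rw [hkey0 W le_rfl, if_pos rfl]
  set D := ((k : ℝ) * ε) ^ (W.length + 1) / R ^ (W.length + 1) with hD
  have hD0 : 0 ≤ D := by positivity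
  have hterm : ∀ V : List (Fin d),
      |if V = W then 0 else c V * ((V.map N).prod) a0 ⟨W.length, hnk⟩|
        ≤ D * (|c V| * R ^ V.length) := by
    intro V
    have hrhs : 0 ≤ D * (|c V| * R ^ V.length) := mul_nonneg hD0 (by positivity)
    by_cases hVW : V = W
    · rw [if_pos hVW, abs_zero]; exact hrhs
    · rw [if_neg hVW]
      by_cases hlen : V.length ≤ W.length
      · rw [hkey0 V hlen, if_neg hVW, mul_zero, abs_zero]; exact hrhs
      · push_neg at hlen
        rw [abs_mul]
        have h2 : ((k : ℝ) * ε) ^ V.length ≤ D * R ^ V.length := by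
          rw [hD, div_mul_eq_mul_div, le_div_iff₀ (by positivity)]
          have e1 : V.length = (W.length + 1) + (V.length - (W.length + 1)) := by omega
          rw [e1, pow_add ((k : ℝ) * ε) (W.length + 1) (V.length - (W.length + 1)),
            pow_add R (W.length + 1) (V.length - (W.length + 1))]
          have h3 : ((k : ℝ) * ε) ^ (V.length - (W.length + 1))
              ≤ R ^ (V.length - (W.length + 1)) := pow_le_pow_left₀ hkε0 hkεR _
          have h4 : (0 : ℝ) ≤ ((k : ℝ) * ε) ^ (W.length + 1) := by positivity
          have h5 : (0 : ℝ) ≤ R ^ (W.length + 1) := by positivity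
          nlinarith [mul_le_mul_of_nonneg_left h3 (mul_nonneg h4 h5),
            pow_nonneg hkε0 (V.length - (W.length + 1))]
        calc |c V| * |((V.map N).prod) a0 ⟨W.length, hnk⟩|
            ≤ |c V| * ((k : ℝ) * ε) ^ V.length :=
              mul_le_mul_of_nonneg_left (hPbound V a0 _) (abs_nonneg _)
          _ ≤ |c V| * (D * R ^ V.length) := mul_le_mul_of_nonneg_left h2 (abs_nonneg _)
          _ = D * (|c V| * R ^ V.length) := by ring
  have hbs : Summable (fun V : List (Fin d) => D * (|c V| * R ^ V.length)) := hc.mul_left D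
  have habs2 : Summable (fun V : List (Fin d) =>
      |if V = W then 0 else c V * ((V.map N).prod) a0 ⟨W.length, hnk⟩|) :=
    hbs.of_nonneg_of_le (fun _ => abs_nonneg _) hterm
  have hT : |T| ≤ D * S := by
    have habs2' : Summable (fun V : List (Fin d) =>
        ‖if V = W then 0 else c V * ((V.map N).prod) a0 ⟨W.length, hnk⟩‖) := by
      simpa [Real.norm_eq_abs] using habs2
    have h0 := norm_tsum_le_tsum_norm habs2'
    simp only [Real.norm_eq_abs] at h0
    refine le_trans h0 ?_
    calc (∑' V : List (Fin d),
          |if V = W then 0 else c V * ((V.map N).prod) a0 ⟨W.length, hnk⟩|)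
        ≤ ∑' V : List (Fin d), D * (|c V| * R ^ V.length) := Summable.tsum_le_tsum hterm habs2 hbs
      _ = D * S := by rw [hS]; exact tsum_mul_left
  have hεn : 0 < ε ^ W.length := pow_pos hε0 _
  have hsmall : D * S < |c W| * ε ^ W.length := by
    have hε2 : ε ≤ |c W| * R ^ (W.length + 1) / ((k : ℝ) ^ (W.length + 1) * (2 * (S + 1))) :=
      min_le_right _ _
    have hX : ε * ((k : ℝ) ^ (W.length + 1) * (2 * (S + 1))) ≤ |c W| * R ^ (W.length + 1) :=
      (le_div_iff₀ (mul_pos (pow_pos hk0 _) (by linarith))).mp hε2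
    have hXS : (k : ℝ) ^ (W.length + 1) * ε * S < |c W| * R ^ (W.length + 1) := by
      nlinarith [mul_pos hcW (pow_pos hR (W.length + 1)),
        mul_nonneg (mul_nonneg (pow_nonneg (le_of_lt hk0) (W.length + 1)) (le_of_lt hε0)) hS0]
    rw [hD, div_mul_eq_mul_div, div_lt_iff₀ (by positivity), mul_pow]
    calc (k : ℝ) ^ (W.length + 1) * ε ^ (W.length + 1) * S
        = ((k : ℝ) ^ (W.length + 1) * ε * S) * ε ^ W.length := by rw [pow_succ]; ring
      _ < (|c W| * R ^ (W.length + 1)) * ε ^ W.length := by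
          exact mul_lt_mul_of_pos_right hXS hεn
      _ = |c W| * ε ^ W.length * R ^ (W.length + 1) := by ring
  refine ⟨N, fun j => Stmt8Aux.NN_triAnti k W ε j, hsum, ?_⟩
  intro h0
  have hval : (∑' V : List (Fin d), c V • (V.map N).prod) a0 ⟨W.length, hnk⟩ = 0 := by
    rw [h0]; rfl
  rw [happ, hsplit, hgW] at hval
  have h6 : |c W * ε ^ W.length| ≤ D * S := by
    have h7 : c W * ε ^ W.length = -T := by linarith
    rw [h7, abs_neg]
    exact hT
  rw [abs_mul, abs_pow, hεabs] at h6
  linarith
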